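/- Let c : Fin M → ℝ^d and let D_{ij} ≥ 0 be costs with D_{ii} = 0 for all i and D_{ij} ≤ B for all i,j. Let ω, π be probability vectors and γ a coupling of ω and π with γ_{ii} ≥ min(ω_i, π_i). Suppose further ℓ_i ≤ ω_i ≤ u_i and ℓ_i ≤ π_i ≤ u_i for all i. Then ∑_{i,j} D_{ij} γ_{ij} ≤ B · ∑_i (u_i - ℓ_i). -/
import Mathlib

open Finset

theorem stmt_5 (M d : ℕ) (hM : 0 < M) (hd : 0 < d)
    (c : Fin M → Fin d → ℝ)
    (D : Fin M → Fin M → ℝ) (B : ℝ)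
    (hDpos : ∀ i j, 0 ≤ D i j) (hDdiag : ∀ i, D i i = 0)
    (hDB : ∀ i j, D i j ≤ B)
    (ω π : Fin M → ℝ)
    (hω : ∀ i, 0 ≤ ω i) (hπ : ∀ i, 0 ≤ π i)
    (hωsum : ∑ i, ω i = 1) (hπsum : ∑ i, π i = 1)
    (γ : Fin M → Fin M → ℝ)
    (hγpos : ∀ i j, 0 ≤ γ i j)
    (hrow : ∀ i, ∑ j, γ i j = ω i)
    (hcol : ∀ j, ∑ i, γ i j = π j)
    (hdiag : ∀ i, γ i i ≥ min (ω i) (π i))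
    (ℓ u : Fin M → ℝ)
    (hωbox : ∀ i, ℓ i ≤ ω i ∧ ω i ≤ u i)
    (hπbox : ∀ i, ℓ i ≤ π i ∧ π i ≤ u i) :
    ∑ i, ∑ j, D i j * γ i j ≤ B * ∑ i, (u i - ℓ i) := by
  have i0 : Fin M := ⟨0, hM⟩
  have hB : 0 ≤ B := le_trans (hDpos i0 i0) (hDB i0 i0)
  rw [mul_sum]
  apply sum_le_sum
  intro i _
  have h1 : ∑ j, D i j * γ i j = ∑ j ∈ univ.erase i, D i j * γ i j := by
    rw [sum_erase]
    rw [hDdiag i, zero_mul]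
  rw [h1]
  have h2 : ∑ j ∈ univ.erase i, D i j * γ i j ≤ ∑ j ∈ univ.erase i, B * γ i j := by
    apply sum_le_sum
    intro j _
    exact mul_le_mul_of_nonneg_right (hDB i j) (hγpos i j)
  refine h2.trans ?_
  rw [← mul_sum]
  apply mul_le_mul_of_nonneg_left _ hB
  have h3 : ∑ j ∈ univ.erase i, γ i j = ω i - γ i i := by
    have := sum_erase_add univ (γ i) (mem_univ i)
    rw [hrow i] at this
    linarith
  rw [h3]
  have hmin := hdiag i
  rcases min_le_iff.mp (le_refl (min (ω i) (π i))) with h | h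
  all_goals
    have := (hωbox i).1; have := (hωbox i).2
    have := (hπbox i).1; have := (hπbox i).2
    cases le_total (ω i) (π i) with
    | inl hle => simp [min_eq_left hle] at hmin; linarith
    | inr hle => simp [min_eq_right hle] at hmin; linarith
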